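/- arXiv:1112.0547 — 2 statements merged into one kernel-verified Lean document; each statement's English description precedes it below -/
import Mathlib

section
/- Let skew : ℝ³ → M₃(ℝ) be the map with skew(ξ)x = ξ × x and let cay(ξ) := (I + skew(ξ)/2)(I − skew(ξ)/2)⁻¹. For every ξ ∈ ℝ³ there exists a constant C ≥ 0 such that for all t ∈ [−1, 1], ‖cay(tξ) − exp(skew(tξ))‖ ≤ C|t|³, where exp is the matrix exponential. That is, the Cayley transform is a second order approximation of the matrix exponential of SO(3). -/
open Matrix

noncomputable section

attribute [local instance] Matrix.normedAddCommGroup Matrix.normedSpace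

/-- `skew3 ξ` is the skew-symmetric matrix with `skew3 ξ *ᵥ x = ξ × x`. -/
def skew3 (ξ : Fin 3 → ℝ) : Matrix (Fin 3) (Fin 3) ℝ :=
  !![0, -ξ 2, ξ 1; ξ 2, 0, -ξ 0; -ξ 1, ξ 0, 0]

/-- The Cayley transform `cay ξ = (I + skew ξ / 2) (I − skew ξ / 2)⁻¹`. -/
def cay (ξ : Fin 3 → ℝ) : Matrix (Fin 3) (Fin 3) ℝ :=
  (1 + (2⁻¹ : ℝ) • skew3 ξ) * (1 - (2⁻¹ : ℝ) • skew3 ξ)⁻¹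

private lemma m3_norm_mul (X Y : Matrix (Fin 3) (Fin 3) ℝ) : ‖X * Y‖ ≤ 3 * ‖X‖ * ‖Y‖ := by
  rw [Matrix.norm_le_iff (by positivity)]
  intro i j
  rw [Matrix.mul_apply, Fin.sum_univ_three]
  have hb : ∀ a b c d, ‖X a b * Y c d‖ ≤ ‖X‖ * ‖Y‖ := by
    intro a b c d
    rw [norm_mul]
    exact mul_le_mul (Matrix.norm_entry_le_entrywise_sup_norm X (i := a) (j := b))
      (Matrix.norm_entry_le_entrywise_sup_norm Y (i := c) (j := d)) (norm_nonneg _)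
      ((norm_nonneg _).trans (Matrix.norm_entry_le_entrywise_sup_norm X (i := a) (j := b)))
  calc ‖X i 0 * Y 0 j + X i 1 * Y 1 j + X i 2 * Y 2 j‖
      ≤ ‖X i 0 * Y 0 j‖ + ‖X i 1 * Y 1 j‖ + ‖X i 2 * Y 2 j‖ := norm_add₃_le
    _ ≤ ‖X‖ * ‖Y‖ + ‖X‖ * ‖Y‖ + ‖X‖ * ‖Y‖ := by
        gcongr <;> [exact hb i 0 0 j; exact hb i 1 1 j; exact hb i 2 2 j]
    _ = 3 * ‖X‖ * ‖Y‖ := by ring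

private lemma m3_norm_one : ‖(1 : Matrix (Fin 3) (Fin 3) ℝ)‖ ≤ 1 := by
  rw [Matrix.norm_le_iff zero_le_one]
  intro i j
  rw [Matrix.one_apply]
  split <;> simp

private lemma m3_norm_pow (B : Matrix (Fin 3) (Fin 3) ℝ) (n : ℕ) :
    ‖B ^ n‖ ≤ (3 * ‖B‖) ^ n := by
  induction n with
  | zero => simpa using m3_norm_one
  | succ n ih =>
    calc ‖B ^ (n + 1)‖ = ‖B ^ n * B‖ := by rw [pow_succ]
      _ ≤ 3 * ‖B ^ n‖ * ‖B‖ := m3_norm_mul _ _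
      _ ≤ 3 * (3 * ‖B‖) ^ n * ‖B‖ := by gcongr
      _ = (3 * ‖B‖) ^ (n + 1) := by ring

private lemma exp_taylor (B : Matrix (Fin 3) (Fin 3) ℝ) :
    ‖NormedSpace.exp B - (1 + B + (2⁻¹ : ℝ) • B ^ 2)‖
      ≤ 27 * ‖B‖ ^ 3 * Real.exp (3 * ‖B‖) := by
  have hub : ∀ n : ℕ, ‖((n.factorial : ℝ))⁻¹ • B ^ n‖ ≤ (3 * ‖B‖) ^ n / n.factorial := by
    intro n
    calc ‖((n.factorial : ℝ))⁻¹ • B ^ n‖ = ((n.factorial : ℝ))⁻¹ * ‖B ^ n‖ := by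
          rw [norm_smul, Real.norm_eq_abs, abs_inv, Nat.abs_cast]
      _ ≤ ((n.factorial : ℝ))⁻¹ * (3 * ‖B‖) ^ n := by
          gcongr
          exact m3_norm_pow B n
      _ = (3 * ‖B‖) ^ n / n.factorial := by rw [div_eq_inv_mul]
  have hsum : Summable (fun n : ℕ => ((n.factorial : ℝ))⁻¹ • B ^ n) :=
    Summable.of_norm <| Summable.of_nonneg_of_le (fun n => norm_nonneg _) hub
      (Real.summable_pow_div_factorial (3 * ‖B‖))
  have hexp : NormedSpace.exp B = ∑' n : ℕ, ((n.factorial : ℝ))⁻¹ • B ^ n := by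
    rw [NormedSpace.exp_eq_tsum ℝ]
  have hsplit := Summable.sum_add_tsum_nat_add (f := fun n : ℕ => ((n.factorial : ℝ))⁻¹ • B ^ n) 3 hsum
  have hrange : (∑ i ∈ Finset.range 3, ((i.factorial : ℝ))⁻¹ • B ^ i)
      = 1 + B + (2⁻¹ : ℝ) • B ^ 2 := by
    rw [Finset.sum_range_succ, Finset.sum_range_succ, Finset.sum_range_one]
    norm_num [Nat.factorial]
  have hdiff : NormedSpace.exp B - (1 + B + (2⁻¹ : ℝ) • B ^ 2)
      = ∑' n : ℕ, (((n + 3).factorial : ℝ))⁻¹ • B ^ (n + 3) := by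
    rw [hexp, ← hsplit, hrange]
    abel
  have hub3 : ∀ n : ℕ, ‖(((n + 3).factorial : ℝ))⁻¹ • B ^ (n + 3)‖
      ≤ 27 * ‖B‖ ^ 3 * ((3 * ‖B‖) ^ n / n.factorial) := by
    intro n
    calc ‖(((n + 3).factorial : ℝ))⁻¹ • B ^ (n + 3)‖
        ≤ (3 * ‖B‖) ^ (n + 3) / (n + 3).factorial := hub (n + 3)
      _ ≤ (3 * ‖B‖) ^ (n + 3) / n.factorial := by
          gcongr
          omega
      _ = 27 * ‖B‖ ^ 3 * ((3 * ‖B‖) ^ n / n.factorial) := by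
          rw [pow_add]; ring
  have hgs : Summable (fun n : ℕ => 27 * ‖B‖ ^ 3 * ((3 * ‖B‖) ^ n / n.factorial)) :=
    (Real.summable_pow_div_factorial (3 * ‖B‖)).mul_left _
  have hsn : Summable (fun n : ℕ => ‖(((n + 3).factorial : ℝ))⁻¹ • B ^ (n + 3)‖) :=
    Summable.of_nonneg_of_le (fun n => norm_nonneg _) hub3 hgs
  rw [hdiff]
  calc ‖∑' n : ℕ, (((n + 3).factorial : ℝ))⁻¹ • B ^ (n + 3)‖
      ≤ ∑' n : ℕ, ‖(((n + 3).factorial : ℝ))⁻¹ • B ^ (n + 3)‖ := norm_tsum_le_tsum_norm hsn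
    _ ≤ ∑' n : ℕ, 27 * ‖B‖ ^ 3 * ((3 * ‖B‖) ^ n / n.factorial) := hsn.tsum_le_tsum hub3 hgs
    _ = 27 * ‖B‖ ^ 3 * ∑' n : ℕ, (3 * ‖B‖) ^ n / n.factorial := tsum_mul_left
    _ = 27 * ‖B‖ ^ 3 * Real.exp (3 * ‖B‖) := by
        rw [Real.exp_eq_exp_ℝ, NormedSpace.exp_eq_tsum_div]

private lemma skew3_smul (t : ℝ) (ξ : Fin 3 → ℝ) : skew3 (t • ξ) = t • skew3 ξ := by
  ext i j
  fin_cases i <;> fin_cases j <;> simp [skew3] <;> ring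

set_option maxHeartbeats 4000000 in
private lemma cay_smul_eq (ξ : Fin 3 → ℝ) (t : ℝ) :
    cay (t • ξ)
      = 1 + (t / (1 + t ^ 2 * (ξ 0 ^ 2 + ξ 1 ^ 2 + ξ 2 ^ 2) / 4)) • skew3 ξ
        + ((t ^ 2 / 2) / (1 + t ^ 2 * (ξ 0 ^ 2 + ξ 1 ^ 2 + ξ 2 ^ 2) / 4))
            • (skew3 ξ * skew3 ξ) := by
  have hd : (1 + t ^ 2 * (ξ 0 ^ 2 + ξ 1 ^ 2 + ξ 2 ^ 2) / 4) ≠ 0 := by positivity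
  have hinv : (1 - (2⁻¹ : ℝ) • skew3 (t • ξ))⁻¹
      = 1 + ((t / 2) / (1 + t ^ 2 * (ξ 0 ^ 2 + ξ 1 ^ 2 + ξ 2 ^ 2) / 4)) • skew3 ξ
        + (((t / 2) ^ 2) / (1 + t ^ 2 * (ξ 0 ^ 2 + ξ 1 ^ 2 + ξ 2 ^ 2) / 4))
            • (skew3 ξ * skew3 ξ) := by
    apply Matrix.inv_eq_right_inv
    rw [skew3_smul]
    ext i j
    fin_cases i <;> fin_cases j <;>
      · simp [skew3, Matrix.mul_apply, Fin.sum_univ_three, Matrix.one_apply, Matrix.add_apply,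
          Matrix.sub_apply, Matrix.smul_apply, smul_eq_mul]
        field_simp
        ring
  rw [cay, hinv, skew3_smul]
  ext i j
  fin_cases i <;> fin_cases j <;>
    · simp [skew3, Matrix.mul_apply, Fin.sum_univ_three, Matrix.one_apply, Matrix.add_apply,
        Matrix.smul_apply, smul_eq_mul]
      field_simp
      ring

/-- The Cayley transform is a second order approximation of the matrix exponential of
`SO(3)`: for every `ξ` there is `C ≥ 0` with
`‖cay (tξ) − exp (skew (tξ))‖ ≤ C |t|³` for all `t ∈ [−1, 1]`. -/
theorem cayley_second_order_approx_exp (ξ : Fin 3 → ℝ) :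
    ∃ C : ℝ, 0 ≤ C ∧ ∀ t ∈ Set.Icc (-1 : ℝ) 1,
      ‖cay (t • ξ) - NormedSpace.exp (skew3 (t • ξ))‖ ≤ C * |t| ^ 3 := by
  set A := skew3 ξ with hA
  set θ2 := ξ 0 ^ 2 + ξ 1 ^ 2 + ξ 2 ^ 2 with hθ2
  have hθ : 0 ≤ θ2 := by rw [hθ2]; positivity
  refine ⟨θ2 / 4 * ‖A‖ + θ2 / 8 * ‖A * A‖ + 27 * ‖A‖ ^ 3 * Real.exp (3 * ‖A‖),
    by positivity, ?_⟩
  intro t ht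
  obtain ⟨ht1, ht2⟩ := ht
  have habs : |t| ≤ 1 := abs_le.mpr ⟨ht1, ht2⟩
  have hd0 : (0 : ℝ) < 1 + t ^ 2 * θ2 / 4 := by positivity
  have hd1 : (1 : ℝ) ≤ 1 + t ^ 2 * θ2 / 4 := by nlinarith [sq_nonneg t]
  have hB : skew3 (t • ξ) = t • A := by rw [hA]; exact skew3_smul t ξ
  have hP : cay (t • ξ)
      = 1 + (t / (1 + t ^ 2 * θ2 / 4)) • A
        + ((t ^ 2 / 2) / (1 + t ^ 2 * θ2 / 4)) • (A * A) := by
    rw [hA, hθ2]; exact cay_smul_eq ξ t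
  have hsq : (t • A) ^ 2 = (t ^ 2) • (A * A) := by
    rw [pow_two, smul_mul_smul_comm, ← pow_two]
  -- Scalar coefficient bounds
  have e1 : t / (1 + t ^ 2 * θ2 / 4) - t
      = -(t ^ 3 * θ2 / 4 / (1 + t ^ 2 * θ2 / 4)) := by
    field_simp
    ring
  have key1 : |t / (1 + t ^ 2 * θ2 / 4) - t| ≤ θ2 / 4 * |t| ^ 3 := by
    rw [e1, abs_neg, abs_div, abs_of_pos hd0]
    have h1 : |t ^ 3 * θ2 / 4| = θ2 / 4 * |t| ^ 3 := by
      rw [abs_div, abs_mul, abs_pow, abs_of_nonneg hθ,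
        abs_of_pos (by norm_num : (0 : ℝ) < 4)]
      ring
    calc |t ^ 3 * θ2 / 4| / (1 + t ^ 2 * θ2 / 4) ≤ |t ^ 3 * θ2 / 4| :=
          div_le_self (abs_nonneg _) hd1
      _ = θ2 / 4 * |t| ^ 3 := h1
  have e2 : (t ^ 2 / 2) / (1 + t ^ 2 * θ2 / 4) - t ^ 2 / 2
      = -(t ^ 4 * θ2 / 8 / (1 + t ^ 2 * θ2 / 4)) := by
    field_simp
    ring
  have key2 : |(t ^ 2 / 2) / (1 + t ^ 2 * θ2 / 4) - t ^ 2 / 2| ≤ θ2 / 8 * |t| ^ 3 := by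
    rw [e2, abs_neg, abs_div, abs_of_pos hd0]
    have h1 : |t ^ 4 * θ2 / 8| = θ2 / 8 * |t| ^ 4 := by
      rw [abs_div, abs_mul, abs_pow, abs_of_nonneg hθ,
        abs_of_pos (by norm_num : (0 : ℝ) < 8)]
      ring
    have h2 : |t| ^ 4 ≤ |t| ^ 3 := pow_le_pow_of_le_one (abs_nonneg t) habs (by omega)
    calc |t ^ 4 * θ2 / 8| / (1 + t ^ 2 * θ2 / 4) ≤ |t ^ 4 * θ2 / 8| :=
          div_le_self (abs_nonneg _) hd1
      _ = θ2 / 8 * |t| ^ 4 := h1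
      _ ≤ θ2 / 8 * |t| ^ 3 := by gcongr
  -- Decomposition
  have hsplit : cay (t • ξ) - NormedSpace.exp (skew3 (t • ξ))
      = ((t / (1 + t ^ 2 * θ2 / 4) - t) • A
          + ((t ^ 2 / 2) / (1 + t ^ 2 * θ2 / 4) - t ^ 2 / 2) • (A * A))
        - (NormedSpace.exp (t • A) - (1 + t • A + (2⁻¹ : ℝ) • (t • A) ^ 2)) := by
    rw [hP, hB, hsq]
    module
  rw [hsplit]
  have n1 : ‖(t / (1 + t ^ 2 * θ2 / 4) - t) • A
      + ((t ^ 2 / 2) / (1 + t ^ 2 * θ2 / 4) - t ^ 2 / 2) • (A * A)‖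
      ≤ θ2 / 4 * |t| ^ 3 * ‖A‖ + θ2 / 8 * |t| ^ 3 * ‖A * A‖ := by
    refine le_trans (norm_add_le _ _) ?_
    rw [norm_smul, norm_smul, Real.norm_eq_abs, Real.norm_eq_abs]
    gcongr
  have n2 : ‖NormedSpace.exp (t • A) - (1 + t • A + (2⁻¹ : ℝ) • (t • A) ^ 2)‖
      ≤ 27 * ‖A‖ ^ 3 * Real.exp (3 * ‖A‖) * |t| ^ 3 := by
    refine le_trans (exp_taylor (t • A)) ?_
    rw [norm_smul, Real.norm_eq_abs]
    calc 27 * (|t| * ‖A‖) ^ 3 * Real.exp (3 * (|t| * ‖A‖))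
        ≤ 27 * (|t| * ‖A‖) ^ 3 * Real.exp (3 * ‖A‖) := by
          gcongr
          nlinarith [norm_nonneg A, abs_nonneg t]
      _ = 27 * (|t| ^ 3 * ‖A‖ ^ 3) * Real.exp (3 * ‖A‖) := by ring
      _ ≤ 27 * ‖A‖ ^ 3 * Real.exp (3 * ‖A‖) * |t| ^ 3 := by
          apply le_of_eq; ring
  calc ‖_ - _‖ ≤ ‖(t / (1 + t ^ 2 * θ2 / 4) - t) • A
        + ((t ^ 2 / 2) / (1 + t ^ 2 * θ2 / 4) - t ^ 2 / 2) • (A * A)‖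
      + ‖NormedSpace.exp (t • A) - (1 + t • A + (2⁻¹ : ℝ) • (t • A) ^ 2)‖ :=
        norm_sub_le _ _
    _ ≤ (θ2 / 4 * |t| ^ 3 * ‖A‖ + θ2 / 8 * |t| ^ 3 * ‖A * A‖)
        + 27 * ‖A‖ ^ 3 * Real.exp (3 * ‖A‖) * |t| ^ 3 := add_le_add n1 n2
    _ = (θ2 / 4 * ‖A‖ + θ2 / 8 * ‖A * A‖ + 27 * ‖A‖ ^ 3 * Real.exp (3 * ‖A‖)) * |t| ^ 3 := by
        ring
end
end

section
/- Let skew : ℝ³ → M₃(ℝ) be the map with skew(ξ)x = ξ × x, let ω, ω̃ : ℝ³ → ℝ³ be Lipschitz maps such that ω̃(m) − ω(m) = σ(m) m for some function σ : ℝ³ → ℝ and all m ∈ ℝ³, and let m₀ ∈ ℝ³. Suppose Q, Q̃ : ℝ → M₃(ℝ) are differentiable curves with Q(0) = Q̃(0) = I satisfying Q'(t) = skew(ω(Q(t) m₀)) Q(t) and Q̃'(t) = skew(ω̃(Q̃(t) m₀)) Q̃(t). Then Q(t) m₀ = Q̃(t) m₀ for all t, even though the curves Q and Q̃ in the group may differ.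 -/
open Matrix

noncomputable section

attribute [local instance] Matrix.normedAddCommGroup Matrix.normedSpace

open Set

lemma skew3_mulVec (ξ x : Fin 3 → ℝ) :
    skew3 ξ *ᵥ x = ![ξ 1 * x 2 - ξ 2 * x 1, ξ 2 * x 0 - ξ 0 * x 2, ξ 0 * x 1 - ξ 1 * x 0] := by
  funext i
  fin_cases i <;>
    simp [skew3, Matrix.mulVec, dotProduct, Fin.sum_univ_three] <;> ring

lemma skew3_add_smul_mulVec_self (ξ m : Fin 3 → ℝ) (c : ℝ) :
    skew3 (ξ + c • m) *ᵥ m = skew3 ξ *ᵥ m := by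
  funext i
  fin_cases i <;>
    simp [skew3, Matrix.mulVec, dotProduct, Fin.sum_univ_three] <;> ring

lemma skew3_mulVec_sub_skew3_mulVec (ξ η x y : Fin 3 → ℝ) :
    skew3 ξ *ᵥ x - skew3 η *ᵥ y = skew3 ξ *ᵥ (x - y) + skew3 (ξ - η) *ᵥ y := by
  funext i
  fin_cases i <;>
    simp [skew3, Matrix.mulVec, dotProduct, Fin.sum_univ_three] <;> ring

lemma skew3_mulVec_dot (ξ x : Fin 3 → ℝ) : (skew3 ξ *ᵥ x) ⬝ᵥ x = 0 := by
  simp [skew3, Matrix.mulVec, dotProduct, Fin.sum_univ_three]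
  ring

lemma norm_skew3_mulVec_le (ξ x : Fin 3 → ℝ) : ‖skew3 ξ *ᵥ x‖ ≤ 2 * ‖ξ‖ * ‖x‖ := by
  have h : ∀ i j : Fin 3, |ξ i| * |x j| ≤ ‖ξ‖ * ‖x‖ := fun i j =>
    mul_le_mul (norm_le_pi_norm ξ i) (norm_le_pi_norm x j) (abs_nonneg _) (norm_nonneg _)
  have key : ∀ a b c d : Fin 3, |ξ a * x b - ξ c * x d| ≤ 2 * ‖ξ‖ * ‖x‖ := by
    intro a b c d
    calc |ξ a * x b - ξ c * x d| ≤ |ξ a * x b| + |ξ c * x d| := abs_sub _ _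
      _ = |ξ a| * |x b| + |ξ c| * |x d| := by rw [abs_mul, abs_mul]
      _ ≤ ‖ξ‖ * ‖x‖ + ‖ξ‖ * ‖x‖ := add_le_add (h a b) (h c d)
      _ = 2 * ‖ξ‖ * ‖x‖ := by ring
  have h0 : (0:ℝ) ≤ 2 * ‖ξ‖ * ‖x‖ := by positivity
  rw [pi_norm_le_iff_of_nonneg h0, skew3_mulVec]
  intro i
  fin_cases i
  · exact key 1 2 2 1
  · exact key 2 0 0 2
  · exact key 0 1 1 0

/-- Derivative of the projection `t ↦ Q t *ᵥ m₀`. -/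
lemma hasDerivAt_proj {Q : ℝ → Matrix (Fin 3) (Fin 3) ℝ} {D : Matrix (Fin 3) (Fin 3) ℝ}
    {t : ℝ} (m₀ : Fin 3 → ℝ) (h : HasDerivAt Q D t) :
    HasDerivAt (fun t => Q t *ᵥ m₀) (D *ᵥ m₀) t := by
  let L : Matrix (Fin 3) (Fin 3) ℝ →ₗ[ℝ] (Fin 3 → ℝ) :=
    { toFun := fun A => A *ᵥ m₀
      map_add' := fun A B => Matrix.add_mulVec A B m₀
      map_smul' := fun c A => Matrix.smul_mulVec c A m₀ }
  exact L.toContinuousLinearMap.hasFDerivAt.comp_hasDerivAt t h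

/-- Conservation of the squared norm along solutions of `μ' = skew3 (ω μ) μ`. -/
lemma dot_self_const {μ : ℝ → Fin 3 → ℝ} (ω : (Fin 3 → ℝ) → (Fin 3 → ℝ))
    (hμ : ∀ t, HasDerivAt μ (skew3 (ω (μ t)) *ᵥ μ t) t) (t : ℝ) :
    μ t ⬝ᵥ μ t = μ 0 ⬝ᵥ μ 0 := by
  have hg : ∀ s : ℝ, HasDerivAt (fun u => μ u ⬝ᵥ μ u) 0 s := by
    intro s
    have hc : ∀ i, HasDerivAt (fun u => μ u i) ((skew3 (ω (μ s)) *ᵥ μ s) i) s :=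
      fun i => hasDerivAt_pi.1 (hμ s) i
    have hsum : HasDerivAt (fun u => ∑ i, μ u i * μ u i)
        (∑ i, ((skew3 (ω (μ s)) *ᵥ μ s) i * μ s i + μ s i * (skew3 (ω (μ s)) *ᵥ μ s) i)) s :=
      HasDerivAt.fun_sum fun i _ => (hc i).mul (hc i)
    have hzero : (∑ i, ((skew3 (ω (μ s)) *ᵥ μ s) i * μ s i
        + μ s i * (skew3 (ω (μ s)) *ᵥ μ s) i)) = 0 := by
      rw [Finset.sum_add_distrib]
      have h1 : (∑ i, (skew3 (ω (μ s)) *ᵥ μ s) i * μ s i) = 0 := skew3_mulVec_dot _ _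
      have h2 : (∑ i, μ s i * (skew3 (ω (μ s)) *ᵥ μ s) i) = 0 := by
        rw [← dotProduct, dotProduct_comm]
        exact skew3_mulVec_dot _ _
      rw [h1, h2, add_zero]
    rw [hzero] at hsum
    exact hsum
  exact is_const_of_deriv_eq_zero (fun s => (hg s).differentiableAt)
    (fun s => (hg s).deriv) t 0

/-- Two Lipschitz generators differing by an isotropy component `σ(m) m` define distinct
ODEs `Q' = skew(ω(Q m₀)) Q` on the matrix group, but the projections `t ↦ Q t *ᵥ m₀` of
their solution curves coincide. -/
theorem isotropy_component_same_projection
    (ω ω' : (Fin 3 → ℝ) → (Fin 3 → ℝ)) (K K' : NNReal)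
    (hω : LipschitzWith K ω) (hω' : LipschitzWith K' ω')
    (σ : (Fin 3 → ℝ) → ℝ) (hσ : ∀ m : Fin 3 → ℝ, ω' m - ω m = σ m • m)
    (m₀ : Fin 3 → ℝ)
    (Q Q' : ℝ → Matrix (Fin 3) (Fin 3) ℝ)
    (hQ0 : Q 0 = 1) (hQ'0 : Q' 0 = 1)
    (hQ : ∀ t : ℝ, HasDerivAt Q (skew3 (ω (Q t *ᵥ m₀)) * Q t) t)
    (hQ' : ∀ t : ℝ, HasDerivAt Q' (skew3 (ω' (Q' t *ᵥ m₀)) * Q' t) t) :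
    ∀ t : ℝ, Q t *ᵥ m₀ = Q' t *ᵥ m₀ := by
  set μ : ℝ → Fin 3 → ℝ := fun t => Q t *ᵥ m₀ with hμdef
  set ν : ℝ → Fin 3 → ℝ := fun t => Q' t *ᵥ m₀ with hνdef
  set v : (Fin 3 → ℝ) → (Fin 3 → ℝ) := fun x => skew3 (ω x) *ᵥ x with hvdef
  -- derivatives of the projections
  have hμ' : ∀ t, HasDerivAt μ (v (μ t)) t := by
    intro t
    have := hasDerivAt_proj m₀ (hQ t)
    rwa [← Matrix.mulVec_mulVec] at this
  have hν' : ∀ t, HasDerivAt ν (v (ν t)) t := by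
    intro t
    have := hasDerivAt_proj m₀ (hQ' t)
    rw [← Matrix.mulVec_mulVec] at this
    have hkey : skew3 (ω' (ν t)) *ᵥ ν t = skew3 (ω (ν t)) *ᵥ ν t := by
      have : ω' (ν t) = ω (ν t) + σ (ν t) • ν t := by
        rw [← hσ (ν t)]; abel
      rw [this, skew3_add_smul_mulVec_self]
    rwa [hkey] at this
  -- conserved squared norm
  have hμ0 : μ 0 = m₀ := by simp [hμdef, hQ0, Matrix.one_mulVec]
  have hν0 : ν 0 = m₀ := by simp [hνdef, hQ'0, Matrix.one_mulVec]
  set R : ℝ := Real.sqrt (m₀ ⬝ᵥ m₀) with hRdef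
  have hRnn : 0 ≤ R := Real.sqrt_nonneg _
  have hmem : ∀ (f : ℝ → Fin 3 → ℝ), (∀ t, HasDerivAt f (v (f t)) t) → f 0 = m₀ →
      ∀ t, f t ∈ Metric.closedBall (0 : Fin 3 → ℝ) R := by
    intro f hf hf0 t
    have hdot : f t ⬝ᵥ f t = m₀ ⬝ᵥ m₀ := by
      rw [← hf0]; exact dot_self_const ω hf t
    rw [Metric.mem_closedBall, dist_zero_right]
    rw [pi_norm_le_iff_of_nonneg hRnn]
    intro i
    have h1 : (f t i) ^ 2 ≤ m₀ ⬝ᵥ m₀ := by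
      rw [← hdot, dotProduct, pow_two]
      simpa using Finset.single_le_sum (f := fun j => f t j * f t j)
        (fun j _ => mul_self_nonneg (f t j)) (Finset.mem_univ i)
    calc ‖f t i‖ = Real.sqrt ((f t i) ^ 2) := by
          rw [Real.sqrt_sq_eq_abs, Real.norm_eq_abs]
      _ ≤ R := Real.sqrt_le_sqrt h1
  -- Lipschitz bound for v on the closed ball
  set C : ℝ := 2 * ‖ω 0‖ + 4 * (K : ℝ) * R with hCdef
  have hCnn : 0 ≤ C := by positivity
  have hlip : LipschitzOnWith C.toNNReal v (Metric.closedBall (0 : Fin 3 → ℝ) R) := by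
    rw [lipschitzOnWith_iff_dist_le_mul]
    intro x hx y hy
    rw [Metric.mem_closedBall, dist_zero_right] at hx hy
    rw [dist_eq_norm, dist_eq_norm, Real.coe_toNNReal _ hCnn]
    have hxy : ‖ω x - ω y‖ ≤ (K : ℝ) * ‖x - y‖ := by
      have := hω.dist_le_mul x y
      rwa [dist_eq_norm, dist_eq_norm] at this
    have hωx : ‖ω x‖ ≤ ‖ω 0‖ + (K : ℝ) * R := by
      have h1 : ‖ω x - ω 0‖ ≤ (K : ℝ) * ‖x - 0‖ := by
        have := hω.dist_le_mul x 0
        rwa [dist_eq_norm, dist_eq_norm] at this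
      rw [sub_zero] at h1
      have h2 := norm_sub_norm_le (ω x) (ω 0)
      nlinarith [K.coe_nonneg, norm_nonneg x]
    calc ‖v x - v y‖ = ‖skew3 (ω x) *ᵥ (x - y) + skew3 (ω x - ω y) *ᵥ y‖ := by
          rw [hvdef]; rw [skew3_mulVec_sub_skew3_mulVec]
      _ ≤ ‖skew3 (ω x) *ᵥ (x - y)‖ + ‖skew3 (ω x - ω y) *ᵥ y‖ := norm_add_le _ _
      _ ≤ 2 * ‖ω x‖ * ‖x - y‖ + 2 * ‖ω x - ω y‖ * ‖y‖ :=
          add_le_add (norm_skew3_mulVec_le _ _) (norm_skew3_mulVec_le _ _)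
      _ ≤ C * ‖x - y‖ := by
          have h3 : 2 * ‖ω x - ω y‖ * ‖y‖ ≤ 2 * ((K : ℝ) * ‖x - y‖) * R := by
            have h4 : ‖ω x - ω y‖ * ‖y‖ ≤ ((K : ℝ) * ‖x - y‖) * R :=
              mul_le_mul hxy hy (norm_nonneg _)
                (by positivity)
            linarith
          have h5 : 2 * ‖ω x‖ * ‖x - y‖ ≤ 2 * (‖ω 0‖ + (K : ℝ) * R) * ‖x - y‖ := by
            nlinarith [norm_nonneg (x - y)]
          rw [hCdef]; nlinarith [norm_nonneg (x - y)]
  -- uniqueness of solutions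
  intro t
  have hcont : 0 ∈ Ioo (-(|t| + 1)) (|t| + 1) :=
    ⟨by nlinarith [abs_nonneg t], by nlinarith [abs_nonneg t]⟩
  have huniq := ODE_solution_unique_of_mem_Ioo
    (v := fun _ : ℝ => v) (s := fun _ => Metric.closedBall (0 : Fin 3 → ℝ) R)
    (K := C.toNNReal) (f := μ) (g := ν) (t₀ := 0)
    (fun _ _ => hlip) hcont
    (fun s _ => ⟨hμ' s, hmem μ hμ' hμ0 s⟩)
    (fun s _ => ⟨hν' s, hmem ν hν' hν0 s⟩)
    (by rw [hμ0, hν0])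
  exact huniq ⟨by nlinarith [neg_abs_le t, abs_nonneg t], by nlinarith [le_abs_self t]⟩
end
end
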